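/- Let n ≥ 2 and 1 ≤ k ≤ n be integers, and let C be any subset of {1,…,n} with |C| = k. Then EMD(C) ≥ (n+k)(n−k) / (4·n·(n−1)·k). -/

import Mathlib

open Finset

/-- Sum of distinct integers all at least `a` is at least `a + (a+1) + ⋯`. -/
lemma sum_ge_of_distinct (a : ℤ) (T : Finset ℤ) (h : ∀ x ∈ T, a ≤ x) :
    (T.card : ℤ) * (2 * a + T.card - 1) ≤ 2 * ∑ x ∈ T, x := by
  classical
  induction T using Finset.strongInduction with
  | _ s ih =>
    rcases s.eq_empty_or_nonempty with rfl | hs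
    · simp
    · set M := s.max' hs with hM
      have hMs : M ∈ s := s.max'_mem hs
      have hcard : (s.erase M).card = s.card - 1 := Finset.card_erase_of_mem hMs
      have hc1 : 1 ≤ s.card := Finset.card_pos.2 hs
      have key := ih (s.erase M) (Finset.erase_ssubset hMs)
        (fun x hx => h x (Finset.mem_of_mem_erase hx))
      have hsum : M + ∑ x ∈ s.erase M, x = ∑ x ∈ s, x :=
        Finset.add_sum_erase s id hMs
      have hsub : s ⊆ Finset.Icc a M := fun x hx =>
        Finset.mem_Icc.2 ⟨h x hx, Finset.le_max' s x hx⟩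
      have hcard2 : s.card ≤ (Finset.Icc a M).card := Finset.card_le_card hsub
      have hIcc : (Finset.Icc a M).card = (M + 1 - a).toNat := Int.card_Icc a M
      have hMa : (s.card : ℤ) ≤ M + 1 - a := by omega
      have hkey' : ((s.card : ℤ) - 1) * (2 * a + ((s.card : ℤ) - 1) - 1)
          ≤ 2 * ∑ x ∈ s.erase M, x := by
        have : ((s.erase M).card : ℤ) = (s.card : ℤ) - 1 := by
          rw [hcard]; push_cast [hc1]; ring
        rw [this] at key; exact key
      nlinarith [hkey', hMa, hsum]

/-- Any finset of naturals has total distance to a fixed point at least `(card² - 1)/4`. -/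
lemma fiber_bound (A : Finset ℕ) (u : ℤ) :
    (A.card : ℤ) ^ 2 - 1 ≤ 4 * ∑ j ∈ A, |(j : ℤ) - u| := by
  classical
  set P := A.filter (fun j : ℕ => u ≤ (j : ℤ)) with hPdef
  set M := A.filter (fun j : ℕ => ¬ u ≤ (j : ℤ)) with hMdef
  have hPM : P.card + M.card = A.card :=
    Finset.card_filter_add_card_filter_not _
  have hsplit : ∑ j ∈ P, |(j : ℤ) - u| + ∑ j ∈ M, |(j : ℤ) - u|
      = ∑ j ∈ A, |(j : ℤ) - u| := Finset.sum_filter_add_sum_filter_not _ _ _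
  -- bound on P
  have hinjP : Set.InjOn (fun j : ℕ => (j : ℤ) - u) P := by
    intro x _ y _ hxy
    have : (x : ℤ) = y := by dsimp at hxy; linarith
    exact_mod_cast this
  have hcardP : (P.image fun j : ℕ => (j : ℤ) - u).card = P.card :=
    Finset.card_image_of_injOn hinjP
  have hsumP : ∑ x ∈ P.image (fun j : ℕ => (j : ℤ) - u), x
      = ∑ j ∈ P, ((j : ℤ) - u) := Finset.sum_image hinjP
  have hP : (P.card : ℤ) * ((P.card : ℤ) - 1) ≤ 2 * ∑ j ∈ P, |(j : ℤ) - u| := by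
    have h0 : ∀ x ∈ P.image (fun j : ℕ => (j : ℤ) - u), (0 : ℤ) ≤ x := by
      intro x hx
      obtain ⟨j, hj, rfl⟩ := Finset.mem_image.1 hx
      have := (Finset.mem_filter.1 hj).2
      linarith
    have := sum_ge_of_distinct 0 _ h0
    rw [hcardP, hsumP] at this
    have habs : ∑ j ∈ P, |(j : ℤ) - u| = ∑ j ∈ P, ((j : ℤ) - u) := by
      refine Finset.sum_congr rfl fun j hj => ?_
      exact abs_of_nonneg (by linarith [(Finset.mem_filter.1 hj).2])
    rw [habs]; linarith
  -- bound on M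
  have hinjM : Set.InjOn (fun j : ℕ => u - (j : ℤ)) M := by
    intro x _ y _ hxy
    have : (x : ℤ) = y := by dsimp at hxy; linarith
    exact_mod_cast this
  have hcardM : (M.image fun j : ℕ => u - (j : ℤ)).card = M.card :=
    Finset.card_image_of_injOn hinjM
  have hsumM : ∑ x ∈ M.image (fun j : ℕ => u - (j : ℤ)), x
      = ∑ j ∈ M, (u - (j : ℤ)) := Finset.sum_image hinjM
  have hM : (M.card : ℤ) * ((M.card : ℤ) + 1) ≤ 2 * ∑ j ∈ M, |(j : ℤ) - u| := by
    have h1 : ∀ x ∈ M.image (fun j : ℕ => u - (j : ℤ)), (1 : ℤ) ≤ x := by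
      intro x hx
      obtain ⟨j, hj, rfl⟩ := Finset.mem_image.1 hx
      have := (Finset.mem_filter.1 hj).2
      omega
    have := sum_ge_of_distinct 1 _ h1
    rw [hcardM, hsumM] at this
    have habs : ∑ j ∈ M, |(j : ℤ) - u| = ∑ j ∈ M, (u - (j : ℤ)) := by
      refine Finset.sum_congr rfl fun j hj => ?_
      have := (Finset.mem_filter.1 hj).2
      rw [abs_sub_comm]
      exact abs_of_nonneg (by linarith)
    rw [habs]; linarith
  have hcast : ((P.card : ℤ) + M.card) = (A.card : ℤ) := by exact_mod_cast hPM
  nlinarith [sq_nonneg ((P.card : ℤ) - M.card - 1), hP, hM, hsplit]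

/-- The Earth Mover's Distance (with the ordered distance) between the uniform
distribution on a cluster `C ⊆ {1,…,n}` of `k` records and the uniform
distribution on the whole data set `{1,…,n}`. -/
noncomputable def EMD (n k : ℕ) (C : Finset ℕ) : ℝ :=
  (1 / ((n : ℝ) - 1)) * ∑ i ∈ Finset.Icc 1 n,
    |∑ j ∈ Finset.Icc 1 i, ((if j ∈ C then (1 : ℝ) / k else 0) - 1 / n)|

/-- Any cluster of `k` records among `n` has EMD at least
`(n+k)(n−k)/(4n(n−1)k)`. -/
theorem emd_lower_bound (n k : ℕ) (hn : 2 ≤ n) (hk : 1 ≤ k) (hkn : k ≤ n)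
    (C : Finset ℕ) (hC : C ⊆ Finset.Icc 1 n) (hcard : C.card = k) :
    ((n : ℝ) + k) * ((n : ℝ) - k) / (4 * n * ((n : ℝ) - 1) * k) ≤ EMD n k C := by
  classical
  have hC0 : C.Nonempty := Finset.card_pos.1 (by omega)
  -- distance to C
  set d : ℕ → ℤ := fun j => C.inf' hC0 (fun u => |(j : ℤ) - (u : ℤ)|) with hd
  have hd0 : ∀ j, 0 ≤ d j := fun j => Finset.le_inf' _ _ (fun u _ => abs_nonneg _)
  have hdC : ∀ j ∈ C, d j = 0 := by
    intro j hj
    have h1 : d j ≤ |(j : ℤ) - (j : ℤ)| := Finset.inf'_le _ hj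
    simp at h1
    exact le_antisymm h1 (hd0 j)
  have hlip : ∀ j : ℕ, |d (j + 1) - d j| ≤ 1 := by
    intro j
    rw [abs_le]
    constructor
    · -- d j ≤ d (j+1) + 1
      obtain ⟨u, hu, hval⟩ := Finset.exists_mem_eq_inf' hC0 (fun u => |((j : ℤ) + 1) - (u : ℤ)|)
      have h1 : d j ≤ |(j : ℤ) - (u : ℤ)| := Finset.inf'_le _ hu
      have h2 : d (j + 1) = |((j : ℤ) + 1) - (u : ℤ)| := by
        rw [hd]; push_cast; exact hval
      have h3 : |(j : ℤ) - (u : ℤ)| ≤ |((j : ℤ) + 1) - (u : ℤ)| + 1 := by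
        have := abs_sub_abs_le_abs_sub ((j : ℤ) - u) (((j : ℤ) + 1) - u)
        have h4 : |((j : ℤ) - u) - (((j : ℤ) + 1) - u)| = 1 := by norm_num
        linarith [abs_sub_abs_le_abs_sub ((j : ℤ) - u) (((j : ℤ) + 1) - u), h4.le]
      linarith
    · -- d (j+1) ≤ d j + 1
      obtain ⟨u, hu, hval⟩ := Finset.exists_mem_eq_inf' hC0 (fun u => |(j : ℤ) - (u : ℤ)|)
      have h1 : d (j + 1) ≤ |((j : ℕ) + 1 : ℕ) - (u : ℤ)| := by
        have := Finset.inf'_le (fun u : ℕ => |((j + 1 : ℕ) : ℤ) - (u : ℤ)|) hu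
        exact this
      have h2 : d j = |(j : ℤ) - (u : ℤ)| := hval
      have h3 : |(((j : ℕ) + 1 : ℕ) : ℤ) - (u : ℤ)| ≤ |(j : ℤ) - (u : ℤ)| + 1 := by
        push_cast
        have h4 : ((j : ℤ) + 1) - u = ((j : ℤ) - u) + 1 := by ring
        rw [h4]
        exact (abs_add_le _ _).trans (by norm_num)
      have h5 : |(((j : ℕ) + 1 : ℕ) : ℤ) - (u : ℤ)| = |((j : ℤ) + 1) - (u : ℤ)| := by
        push_cast; ring_nf
      linarith [h1, h3]
  -- integer step function
  set e : ℕ → ℤ := fun j => (if j ∈ C then (n : ℤ) else 0) - k with he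
  set g : ℕ → ℤ := fun i => ∑ j ∈ Finset.Icc 1 i, e j with hg
  have hgn : g n = 0 := by
    rw [hg]
    simp only [he, Finset.sum_sub_distrib]
    rw [Finset.sum_ite_mem, Finset.inter_eq_right.2 hC]
    simp [Finset.sum_const, Nat.card_Icc, hcard]
    ring
  -- Abel summation
  have abel : ∀ N : ℕ, ∑ j ∈ Finset.Icc 1 N, e j * (-(d j))
      = (∑ j ∈ Finset.Icc 1 N, g j * (d (j + 1) - d j)) + g N * (-(d (N + 1))) := by
    intro N
    induction N with
    | zero => simp [hg]
    | succ N ihN =>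
      have hins : insert (N + 1) (Finset.Icc 1 N) = Finset.Icc 1 (N + 1) :=
        Finset.insert_Icc_right_eq_Icc_add_one (by omega)
      have hnm : N + 1 ∉ Finset.Icc 1 N := by simp
      have hgs : g (N + 1) = g N + e (N + 1) := by
        show ∑ j ∈ Finset.Icc 1 (N + 1), e j = (∑ j ∈ Finset.Icc 1 N, e j) + e (N + 1)
        rw [← hins, Finset.sum_insert hnm]; ring
      rw [← hins, Finset.sum_insert hnm, Finset.sum_insert hnm, ihN, hgs]
      ring
  have key1 : ∑ j ∈ Finset.Icc 1 n, e j * (-(d j)) ≤ ∑ j ∈ Finset.Icc 1 n, |g j| := by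
    rw [abel n, hgn]
    simp only [zero_mul, add_zero]
    refine Finset.sum_le_sum fun j _ => ?_
    calc g j * (d (j + 1) - d j) ≤ |g j * (d (j + 1) - d j)| := le_abs_self _
      _ = |g j| * |d (j + 1) - d j| := abs_mul _ _
      _ ≤ |g j| * 1 := mul_le_mul_of_nonneg_left (hlip j) (abs_nonneg _)
      _ = |g j| := mul_one _
  have key2 : ∑ j ∈ Finset.Icc 1 n, e j * (-(d j))
      = (k : ℤ) * ∑ j ∈ Finset.Icc 1 n, d j := by
    rw [Finset.mul_sum]
    refine Finset.sum_congr rfl fun j _ => ?_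
    by_cases hj : j ∈ C
    · rw [hdC j hj]; simp
    · simp only [he, hj, if_neg, ite_false]
      ring
  -- fiberwise lower bound on the total distance to C
  have hσ : ∀ j : ℕ, ∃ u, u ∈ C ∧ d j = |(j : ℤ) - (u : ℤ)| := fun j =>
    Finset.exists_mem_eq_inf' hC0 _
  choose σ hσC hσd using hσ
  have hmap : ∀ j ∈ Finset.Icc 1 n, σ j ∈ C := fun j _ => hσC j
  have hfib : ∑ u ∈ C, ∑ j ∈ (Finset.Icc 1 n).filter (fun j => σ j = u), d j
      = ∑ j ∈ Finset.Icc 1 n, d j := Finset.sum_fiberwise_of_maps_to hmap _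
  have hfibcard : ∑ u ∈ C, (((Finset.Icc 1 n).filter (fun j => σ j = u)).card) = n := by
    have := Finset.card_eq_sum_card_fiberwise hmap
    rw [Nat.card_Icc] at this
    omega
  have hBper : ∀ u ∈ C,
      ((((Finset.Icc 1 n).filter (fun j => σ j = u)).card : ℤ)) ^ 2 - 1
        ≤ 4 * ∑ j ∈ (Finset.Icc 1 n).filter (fun j => σ j = u), d j := by
    intro u hu
    have heq : ∑ j ∈ (Finset.Icc 1 n).filter (fun j => σ j = u), d j
        = ∑ j ∈ (Finset.Icc 1 n).filter (fun j => σ j = u), |(j : ℤ) - (u : ℤ)| := by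
      refine Finset.sum_congr rfl fun j hj => ?_
      rw [hσd j, (Finset.mem_filter.1 hj).2]
    rw [heq]
    exact fiber_bound _ _
  have hsumB : (∑ u ∈ C, ((((Finset.Icc 1 n).filter (fun j => σ j = u)).card : ℤ)) ^ 2)
      - k ≤ 4 * ∑ j ∈ Finset.Icc 1 n, d j := by
    have h1 : ∑ u ∈ C, (((((Finset.Icc 1 n).filter (fun j => σ j = u)).card : ℤ)) ^ 2 - 1)
        ≤ ∑ u ∈ C, 4 * ∑ j ∈ (Finset.Icc 1 n).filter (fun j => σ j = u), d j :=
      Finset.sum_le_sum hBper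
    rw [Finset.sum_sub_distrib, ← Finset.mul_sum, hfib] at h1
    simp only [Finset.sum_const, hcard, nsmul_eq_mul, mul_one] at h1
    exact h1
  have hCS : ((n : ℤ)) ^ 2 ≤ (k : ℤ) *
      ∑ u ∈ C, ((((Finset.Icc 1 n).filter (fun j => σ j = u)).card : ℤ)) ^ 2 := by
    have h2 := sq_sum_le_card_mul_sum_sq
      (s := C) (f := fun u => ((((Finset.Icc 1 n).filter (fun j => σ j = u)).card : ℤ)))
    have h3 : ∑ u ∈ C, ((((Finset.Icc 1 n).filter (fun j => σ j = u)).card : ℤ)) = (n : ℤ) := by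
      exact_mod_cast congrArg (Nat.cast : ℕ → ℤ) hfibcard
    rw [h3, hcard] at h2
    exact h2
  have hfinal : (n : ℤ) ^ 2 - (k : ℤ) ^ 2 ≤ 4 * ∑ j ∈ Finset.Icc 1 n, |g j| := by
    have hk0 : (0 : ℤ) ≤ (k : ℤ) := Int.natCast_nonneg k
    have h4 : (k : ℤ) * ∑ j ∈ Finset.Icc 1 n, d j ≤ ∑ j ∈ Finset.Icc 1 n, |g j| := by
      rw [← key2]; exact key1
    nlinarith [hsumB, hCS, h4]
  -- pass to the reals
  set S : ℤ := ∑ j ∈ Finset.Icc 1 n, |g j| with hS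
  have hnR : (0 : ℝ) < n := by positivity
  have hkR : (0 : ℝ) < k := by exact_mod_cast hk
  have hn1 : (0 : ℝ) < (n : ℝ) - 1 := by
    have : (2 : ℝ) ≤ n := by exact_mod_cast hn
    linarith
  have hnk : (0 : ℝ) < (n : ℝ) * k := by positivity
  have hterm : ∀ i : ℕ, ∑ j ∈ Finset.Icc 1 i, ((if j ∈ C then (1 : ℝ) / k else 0) - 1 / n)
      = ((g i : ℤ) : ℝ) / ((n : ℝ) * k) := by
    intro i
    have h5 : ∀ j : ℕ, ((if j ∈ C then (1 : ℝ) / k else 0) - 1 / n)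
        = ((e j : ℤ) : ℝ) / ((n : ℝ) * k) := by
      intro j
      by_cases hj : j ∈ C
      · simp only [he, hj, if_pos, ite_true]
        push_cast
        field_simp
      · simp only [he, hj, if_neg, ite_false]
        push_cast
        field_simp
        ring
    rw [Finset.sum_congr rfl (fun j _ => h5 j), ← Finset.sum_div]
    congr 1
    show (∑ j ∈ Finset.Icc 1 i, ((e j : ℤ) : ℝ)) = ((g i : ℤ) : ℝ)
    rw [hg]
    push_cast
    rfl
  have hEMD : EMD n k C = ((S : ℤ) : ℝ) / (((n : ℝ) - 1) * ((n : ℝ) * k)) := by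
    unfold EMD
    rw [Finset.sum_congr rfl (fun i _ => by rw [hterm i])]
    have h6 : ∀ i : ℕ, |((g i : ℤ) : ℝ) / ((n : ℝ) * k)|
        = ((|g i| : ℤ) : ℝ) / ((n : ℝ) * k) := by
      intro i
      rw [abs_div, abs_of_pos hnk]
      push_cast
      ring
    rw [Finset.sum_congr rfl (fun i _ => h6 i), ← Finset.sum_div]
    have h7 : (∑ i ∈ Finset.Icc 1 n, ((|g i| : ℤ) : ℝ)) = ((S : ℤ) : ℝ) := by
      rw [hS]; push_cast; rfl
    rw [h7]
    field_simp
  have hSreal : ((n : ℝ) + k) * ((n : ℝ) - k) ≤ 4 * ((S : ℤ) : ℝ) := by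
    have h8 : ((n : ℤ) ^ 2 - (k : ℤ) ^ 2 : ℤ) ≤ 4 * S := hfinal
    have h9 : (((n : ℤ) ^ 2 - (k : ℤ) ^ 2 : ℤ) : ℝ) ≤ ((4 * S : ℤ) : ℝ) := by
      exact_mod_cast h8
    push_cast at h9
    nlinarith [h9]
  rw [hEMD, div_le_div_iff₀ (by positivity) (by positivity)]
  have hpos : (0 : ℝ) < ((n : ℝ) - 1) * ((n : ℝ) * k) := by positivity
  nlinarith [mul_le_mul_of_nonneg_right hSreal (le_of_lt hpos)]
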